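/- Let p be an odd positive integer and let m ≥ 1 and n be integers. The group with presentation ⟨y, z ∣ (yz⁻¹)^m, (zy)^p, (zy)^{(p+1)/2} y (zy)^{−(p+1)/2} z⁻¹, y^n⟩ is isomorphic to the group with presentation ⟨w, y ∣ w^p, y^n, (wy)², (y²w²)^m⟩, via the map sending y to y and z to w⁻²y⁻¹, whose inverse sends y to y and w to (zy)^{(p−1)/2}. -/

import Mathlib

/-- Relators of ⟨y, z ∣ (yz⁻¹)^m, (zy)^p, (zy)^((p+1)/2) y (zy)^(−(p+1)/2) z⁻¹, y^n⟩,
with y, z the generators indexed by 0, 1 in `Fin 2`. -/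
def relsYZ (p m : ℕ) (n : ℤ) : Set (FreeGroup (Fin 2)) :=
  letI y : FreeGroup (Fin 2) := FreeGroup.of 0
  letI z : FreeGroup (Fin 2) := FreeGroup.of 1
  {(y * z⁻¹) ^ m, (z * y) ^ p,
    (z * y) ^ ((p + 1) / 2) * y * ((z * y) ^ ((p + 1) / 2))⁻¹ * z⁻¹, y ^ n}

/-- Relators of Coxeter's group (2, p, |n|; m) = ⟨w, y ∣ w^p, y^n, (wy)², (y²w²)^m⟩,
with w, y the generators indexed by 0, 1 in `Fin 2`. -/
def relsWY (p m : ℕ) (n : ℤ) : Set (FreeGroup (Fin 2)) :=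
  letI w : FreeGroup (Fin 2) := FreeGroup.of 0
  letI y : FreeGroup (Fin 2) := FreeGroup.of 1
  {w ^ p, y ^ n, (w * y) ^ 2, (y ^ 2 * w ^ 2) ^ m}

private lemma mk_rel_eq_one {α : Type*} {rels : Set (FreeGroup α)} {r : FreeGroup α}
    (h : r ∈ rels) : PresentedGroup.mk rels r = 1 :=
  (QuotientGroup.eq_one_iff r).2 (Subgroup.subset_normalClosure h)

section Relations

variable (p m : ℕ) (n : ℤ)

local notation "W" => (PresentedGroup.of 0 : PresentedGroup (relsWY p m n))
local notation "Yw" => (PresentedGroup.of 1 : PresentedGroup (relsWY p m n))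
local notation "Y" => (PresentedGroup.of 0 : PresentedGroup (relsYZ p m n))
local notation "Z" => (PresentedGroup.of 1 : PresentedGroup (relsYZ p m n))

lemma relWY_w : W ^ p = 1 := by
  simpa only [map_pow, PresentedGroup.of] using
    mk_rel_eq_one (show (FreeGroup.of (0 : Fin 2)) ^ p ∈ relsWY p m n by simp [relsWY])

lemma relWY_y : Yw ^ n = 1 := by
  simpa only [map_zpow, PresentedGroup.of] using
    mk_rel_eq_one (show (FreeGroup.of (1 : Fin 2)) ^ n ∈ relsWY p m n by simp [relsWY])

lemma relWY_2 : (W * Yw) ^ 2 = 1 := by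
  simpa only [map_pow, map_mul, PresentedGroup.of] using
    mk_rel_eq_one
      (show (FreeGroup.of (0 : Fin 2) * FreeGroup.of 1) ^ 2 ∈ relsWY p m n by simp [relsWY])

lemma relWY_m : (Yw ^ 2 * W ^ 2) ^ m = 1 := by
  simpa only [map_pow, map_mul, PresentedGroup.of] using
    mk_rel_eq_one
      (show (FreeGroup.of (1 : Fin 2) ^ 2 * FreeGroup.of 0 ^ 2) ^ m ∈ relsWY p m n by
        simp [relsWY])

lemma relYZ_m : (Y * Z⁻¹) ^ m = 1 := by
  simpa only [map_pow, map_mul, map_inv, PresentedGroup.of] using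
    mk_rel_eq_one
      (show (FreeGroup.of (0 : Fin 2) * (FreeGroup.of 1)⁻¹) ^ m ∈ relsYZ p m n by simp [relsYZ])

lemma relYZ_p : (Z * Y) ^ p = 1 := by
  simpa only [map_pow, map_mul, PresentedGroup.of] using
    mk_rel_eq_one
      (show (FreeGroup.of (1 : Fin 2) * FreeGroup.of 0) ^ p ∈ relsYZ p m n by simp [relsYZ])

lemma relYZ_c :
    (Z * Y) ^ ((p + 1) / 2) * Y * ((Z * Y) ^ ((p + 1) / 2))⁻¹ * Z⁻¹ = 1 := by
  simpa only [map_pow, map_mul, map_inv, PresentedGroup.of] using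
    mk_rel_eq_one
      (show (FreeGroup.of (1 : Fin 2) * FreeGroup.of 0) ^ ((p + 1) / 2) * FreeGroup.of 0 *
          ((FreeGroup.of (1 : Fin 2) * FreeGroup.of 0) ^ ((p + 1) / 2))⁻¹ *
          (FreeGroup.of 1)⁻¹ ∈ relsYZ p m n by simp [relsYZ])

lemma relYZ_n : Y ^ n = 1 := by
  simpa only [map_zpow, PresentedGroup.of] using
    mk_rel_eq_one (show (FreeGroup.of (0 : Fin 2)) ^ n ∈ relsYZ p m n by simp [relsYZ])

end Relations

/-- Forward map on generators: y ↦ y, z ↦ w⁻²y⁻¹. -/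
def fwdGen (p m : ℕ) (n : ℤ) : Fin 2 → PresentedGroup (relsWY p m n) :=
  ![PresentedGroup.of 1,
    (PresentedGroup.of 0 : PresentedGroup (relsWY p m n)) ^ (-2 : ℤ) * (PresentedGroup.of 1)⁻¹]

/-- Backward map on generators: w ↦ (zy)^((p-1)/2), y ↦ y. -/
def bwdGen (p m : ℕ) (n : ℤ) : Fin 2 → PresentedGroup (relsYZ p m n) :=
  ![((PresentedGroup.of 1 : PresentedGroup (relsYZ p m n)) * PresentedGroup.of 0) ^ ((p - 1) / 2),
    PresentedGroup.of 0]

lemma fwd_rel (p m : ℕ) (hp : Odd p) (n : ℤ) :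
    ∀ r ∈ relsYZ p m n, FreeGroup.lift (fwdGen p m n) r = 1 := by
  obtain ⟨t, ht⟩ := hp
  set W : PresentedGroup (relsWY p m n) := PresentedGroup.of 0 with hWdef
  set Y : PresentedGroup (relsWY p m n) := PresentedGroup.of 1 with hYdef
  have hW : W ^ p = 1 := relWY_w p m n
  have hYn : Y ^ n = 1 := relWY_y p m n
  have h2 : (W * Y) ^ 2 = 1 := relWY_2 p m n
  have hM : (Y ^ 2 * W ^ 2) ^ m = 1 := relWY_m p m n
  have hf0 : fwdGen p m n 0 = Y := rfl
  have hf1 : fwdGen p m n 1 = W ^ (-2 : ℤ) * Y⁻¹ := rfl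
  intro r hr
  simp only [relsYZ, Set.mem_insert_iff, Set.mem_singleton_iff] at hr
  rcases hr with rfl | rfl | rfl | rfl
  · simp only [map_pow, map_mul, map_inv, FreeGroup.lift_apply_of, hf0, hf1]
    have e : Y * (W ^ (-2 : ℤ) * Y⁻¹)⁻¹ = Y ^ 2 * W ^ 2 := by group; simp [zpow_two, sq, mul_assoc]
    rw [e]; exact hM
  · simp only [map_pow, map_mul, FreeGroup.lift_apply_of, hf0, hf1]
    have e : W ^ (-2 : ℤ) * Y⁻¹ * Y = (W ^ 2)⁻¹ := by group
    rw [e, inv_pow, ← pow_mul, mul_comm 2 p, pow_mul, hW, one_pow, inv_one]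
  · simp only [map_pow, map_mul, map_inv, FreeGroup.lift_apply_of, hf0, hf1]
    have eA : (W ^ (-2 : ℤ) * Y⁻¹ * Y) ^ ((p + 1) / 2) = W⁻¹ := by
      have e0 : W ^ (-2 : ℤ) * Y⁻¹ * Y = (W ^ 2)⁻¹ := by group
      have hk : (p + 1) / 2 = t + 1 := by omega
      rw [e0, hk, inv_pow, ← pow_mul]
      have h21 : 2 * (t + 1) = p + 1 := by omega
      rw [h21, pow_succ, hW, one_mul]
    rw [eA]
    have hYWYW : Y * W * Y * W = 1 := by
      have e3 : Y * W * Y * W = W⁻¹ * (W * Y) ^ 2 * W := by rw [sq]; group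
      rw [e3, h2, mul_one, inv_mul_cancel]
    have e2 : W⁻¹ * Y * W⁻¹⁻¹ * (W ^ (-2 : ℤ) * Y⁻¹)⁻¹ = W⁻¹ * (Y * W * Y * W) * W := by
      group; simp [zpow_two, sq, mul_assoc]
    rw [e2, hYWYW, mul_one, inv_mul_cancel]
  · simp only [map_zpow, FreeGroup.lift_apply_of, hf0]
    exact hYn

lemma bwd_rel (p m : ℕ) (hp : Odd p) (n : ℤ) :
    ∀ r ∈ relsWY p m n, FreeGroup.lift (bwdGen p m n) r = 1 := by
  obtain ⟨t, ht⟩ := hp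
  set Y : PresentedGroup (relsYZ p m n) := PresentedGroup.of 0 with hYdef
  set Z : PresentedGroup (relsYZ p m n) := PresentedGroup.of 1 with hZdef
  have hMr : (Y * Z⁻¹) ^ m = 1 := relYZ_m p m n
  have hPr : (Z * Y) ^ p = 1 := relYZ_p p m n
  have hCr : (Z * Y) ^ ((p + 1) / 2) * Y * ((Z * Y) ^ ((p + 1) / 2))⁻¹ * Z⁻¹ = 1 :=
    relYZ_c p m n
  have hNr : Y ^ n = 1 := relYZ_n p m n
  have hq : (p - 1) / 2 = t := by omega
  have hk : (p + 1) / 2 = t + 1 := by omega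
  have hb0 : bwdGen p m n 0 = (Z * Y) ^ ((p - 1) / 2) := rfl
  have hb1 : bwdGen p m n 1 = Y := rfl
  -- key rearrangement of the conjugation relator
  have hc : (Z * Y) ^ (t + 1) * Y = Z * (Z * Y) ^ (t + 1) := by
    rw [hk] at hCr
    have h2 : (Z * Y) ^ (t + 1) * Y * ((Z * Y) ^ (t + 1))⁻¹ = Z := mul_inv_eq_one.mp hCr
    exact mul_inv_eq_iff_eq_mul.mp h2
  have key : (Z * Y) ^ t * Y = Y⁻¹ * (Z * Y) ^ (t + 1) := by
    have e : (Z * Y) ^ t * Y = (Z * Y)⁻¹ * ((Z * Y) ^ (t + 1) * Y) := by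
      rw [pow_succ', mul_assoc ((Z * Y)) ((Z * Y) ^ t) Y, inv_mul_cancel_left]
    rw [e, hc]
    simp only [mul_inv_rev, mul_assoc, inv_mul_cancel_left]
  have hZY2t : (Z * Y) ^ (2 * t) = (Z * Y)⁻¹ := by
    have h1 : (Z * Y) ^ (2 * t) * (Z * Y) = 1 := by
      rw [← pow_succ]
      have : 2 * t + 1 = p := by omega
      rw [this]; exact hPr
    exact eq_inv_of_mul_eq_one_left h1
  intro r hr
  simp only [relsWY, Set.mem_insert_iff, Set.mem_singleton_iff] at hr
  rcases hr with rfl | rfl | rfl | rfl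
  · simp only [map_pow, FreeGroup.lift_apply_of, hb0]
    rw [← pow_mul, mul_comm, pow_mul, hPr, one_pow]
  · simp only [map_zpow, FreeGroup.lift_apply_of, hb1]
    exact hNr
  · simp only [map_pow, map_mul, FreeGroup.lift_apply_of, hb0, hb1, hq]
    calc ((Z * Y) ^ t * Y) ^ 2
        = (Z * Y) ^ t * (Y * ((Z * Y) ^ t * Y)) := by rw [sq]; group
      _ = (Z * Y) ^ t * (Y * (Y⁻¹ * (Z * Y) ^ (t + 1))) := by rw [key]
      _ = (Z * Y) ^ t * (Z * Y) ^ (t + 1) := by rw [mul_inv_cancel_left]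
      _ = (Z * Y) ^ (t + (t + 1)) := (pow_add _ _ _).symm
      _ = 1 := by rw [show t + (t + 1) = p by omega]; exact hPr
  · simp only [map_pow, map_mul, FreeGroup.lift_apply_of, hb0, hb1, hq]
    have e : ((Z * Y) ^ t) ^ 2 = (Z * Y) ^ (2 * t) := by rw [← pow_mul, mul_comm]
    rw [e, hZY2t]
    have e2 : Y ^ 2 * (Z * Y)⁻¹ = Y * Z⁻¹ := by group
    rw [e2]; exact hMr

example : True := trivial

theorem presentedGroup_iso_coxeter (p m : ℕ) (hp : Odd p) (hppos : 0 < p) (hm : 1 ≤ m)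
    (n : ℤ) :
    ∃ φ : PresentedGroup (relsYZ p m n) ≃* PresentedGroup (relsWY p m n),
      φ (PresentedGroup.of 0) = PresentedGroup.of 1 ∧
      φ (PresentedGroup.of 1) =
        (PresentedGroup.of 0 : PresentedGroup (relsWY p m n)) ^ (-2 : ℤ) *
          (PresentedGroup.of 1)⁻¹ ∧
      φ.symm (PresentedGroup.of 1) = PresentedGroup.of 0 ∧
      φ.symm (PresentedGroup.of 0) =
        ((PresentedGroup.of 1 : PresentedGroup (relsYZ p m n)) *
          PresentedGroup.of 0) ^ ((p - 1) / 2) := by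
  obtain ⟨t, ht⟩ := hp
  have hp' : Odd p := ⟨t, ht⟩
  let F : PresentedGroup (relsYZ p m n) →* PresentedGroup (relsWY p m n) :=
    PresentedGroup.toGroup (fwd_rel p m hp' n)
  let G : PresentedGroup (relsWY p m n) →* PresentedGroup (relsYZ p m n) :=
    PresentedGroup.toGroup (bwd_rel p m hp' n)
  have hF0 : F (PresentedGroup.of 0) = PresentedGroup.of 1 := by
    simp [F, PresentedGroup.toGroup.of, fwdGen]
  have hF1 : F (PresentedGroup.of 1) =
      (PresentedGroup.of 0 : PresentedGroup (relsWY p m n)) ^ (-2 : ℤ) *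
        (PresentedGroup.of 1)⁻¹ := by
    simp [F, PresentedGroup.toGroup.of, fwdGen]
  have hG0 : G (PresentedGroup.of 0) =
      ((PresentedGroup.of 1 : PresentedGroup (relsYZ p m n)) *
        PresentedGroup.of 0) ^ ((p - 1) / 2) := by
    simp [G, PresentedGroup.toGroup.of, bwdGen]
  have hG1 : G (PresentedGroup.of 1) = PresentedGroup.of 0 := by
    simp [G, PresentedGroup.toGroup.of, bwdGen]
  have hq : (p - 1) / 2 = t := by omega
  -- composition G ∘ F = id
  have hGF : G.comp F = MonoidHom.id _ := by
    ext x
    fin_cases x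
    · simp [MonoidHom.comp_apply, hF0, hG1]
    · show G (F (PresentedGroup.of 1)) = PresentedGroup.of 1
      rw [hF1, map_mul, map_zpow, map_inv, hG0, hG1, hq]
      set Y : PresentedGroup (relsYZ p m n) := PresentedGroup.of 0
      set Z : PresentedGroup (relsYZ p m n) := PresentedGroup.of 1
      have hZY2t : (Z * Y) ^ (2 * t) = (Z * Y)⁻¹ :=
        eq_inv_of_mul_eq_one_left
          (by rw [← pow_succ, show 2 * t + 1 = p by omega]; exact relYZ_p p m n)
      have e : ((Z * Y) ^ t) ^ (-2 : ℤ) = (((Z * Y) ^ t) ^ (2 : ℕ))⁻¹ := by group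
      rw [e, ← pow_mul, mul_comm t 2, hZY2t, inv_inv, mul_inv_cancel_right]
  -- composition F ∘ G = id
  have hFG : F.comp G = MonoidHom.id _ := by
    ext x
    fin_cases x
    · show F (G (PresentedGroup.of 0)) = PresentedGroup.of 0
      rw [hG0, map_pow, map_mul, hF0, hF1, hq]
      set W : PresentedGroup (relsWY p m n) := PresentedGroup.of 0
      set Yw : PresentedGroup (relsWY p m n) := PresentedGroup.of 1
      have hW2t : W ^ (2 * t) = W⁻¹ :=
        eq_inv_of_mul_eq_one_left
          (by rw [← pow_succ, show 2 * t + 1 = p by omega]; exact relWY_w p m n)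
      rw [show W ^ (-2 : ℤ) * Yw⁻¹ * Yw = (W ^ 2)⁻¹ by group, inv_pow, ← pow_mul,
        hW2t, inv_inv]
    · simp [MonoidHom.comp_apply, hG1, hF0]
  refine ⟨MonoidHom.toMulEquiv F G hGF hFG, hF0, hF1, hG1, hG0⟩
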